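/- Let ℓ ≥ 1 and let a_1 ≤ b_1 < a_2 ≤ b_2 < ... < a_ℓ ≤ b_ℓ be positive integers, so that the integer intervals [a_i, b_i] = {a_i, a_i+1, ..., b_i} are pairwise disjoint, and set X = [a_1,b_1] ∪ [a_2,b_2] ∪ ... ∪ [a_ℓ,b_ℓ]. Then the number of nonempty subsets A of X with gcd(A) = 1 equals Σ_{d=1}^{b_ℓ} μ(d)·(2^{Σ_{i=1}^{ℓ} (⌊b_i/d⌋ − ⌊(a_i−1)/d⌋)} − 1). -/

import Mathlib

open Finset

private lemma count_dvd_Ioc (d m n : ℕ) (h : m ≤ n) :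
    ((Finset.Ioc m n).filter (fun x => d ∣ x)).card = n / d - m / d := by
  have hu : Finset.Ioc 0 m ∪ Finset.Ioc m n = Finset.Ioc 0 n :=
    Finset.Ioc_union_Ioc_eq_Ioc (Nat.zero_le m) h
  have hdisj : Disjoint ((Finset.Ioc 0 m).filter (fun x => d ∣ x))
      ((Finset.Ioc m n).filter (fun x => d ∣ x)) := by
    apply Finset.disjoint_filter_filter
    rw [Finset.disjoint_left]
    intro x hx hx'
    simp only [Finset.mem_Ioc] at hx hx'
    omega
  have key : ((Finset.Ioc 0 m).filter (fun x => d ∣ x)).card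
      + ((Finset.Ioc m n).filter (fun x => d ∣ x)).card = n / d := by
    rw [← Nat.Ioc_filter_dvd_card_eq_div n d, ← hu, Finset.filter_union,
      Finset.card_union_of_disjoint hdisj]
  have h2 := Nat.Ioc_filter_dvd_card_eq_div m d
  omega

/-- Theorem 3(iv): Let `X = [a_1,b_1] ∪ … ∪ [a_ℓ,b_ℓ]` be a union of pairwise
disjoint integer intervals of positive integers (with
`a_1 ≤ b_1 < a_2 ≤ b_2 < … < a_ℓ ≤ b_ℓ`).  Then
`f(X) = Σ_{d=1}^{b_ℓ} μ(d)·(2^{Σ_{i=1}^ℓ (⌊b_i/d⌋ − ⌊(a_i−1)/d⌋)} − 1)`. -/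
theorem card_relPrime_subsets_union_intervals
    (ℓ : ℕ) (hℓ : 1 ≤ ℓ) (a b : ℕ → ℕ)
    (ha : ∀ i < ℓ, 0 < a i) (hab : ∀ i < ℓ, a i ≤ b i)
    (hord : ∀ i, i + 1 < ℓ → b i < a (i + 1)) :
    ((((Finset.range ℓ).biUnion (fun i => Finset.Icc (a i) (b i))).powerset.filter
        (fun A => A.Nonempty ∧ A.gcd id = 1)).card : ℤ) =
    ∑ d ∈ Finset.Icc 1 (b (ℓ - 1)),
      ArithmeticFunction.moebius d *
        (2 ^ (∑ i ∈ Finset.range ℓ, (b i / d - (a i - 1) / d)) - 1) := by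
  classical
  set N := b (ℓ - 1) with hN
  set X : Finset ℕ := (Finset.range ℓ).biUnion (fun i => Finset.Icc (a i) (b i)) with hX
  set t : Finset (Finset ℕ) := X.powerset.filter (fun A => A.Nonempty) with ht
  have hmono : ∀ j, j < ℓ → ∀ i, i ≤ j → b i ≤ b j := by
    intro j
    induction j with
    | zero => intro _ i hi; interval_cases i; exact le_rfl
    | succ k ih =>
      intro hj i hi
      rcases Nat.eq_or_lt_of_le hi with rfl | h
      · exact le_rfl
      · have h1 : b i ≤ b k := ih (by omega) i (by omega)
        have h2 := hord k hj
        have h3 := hab (k + 1) hj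
        omega
  have hblta : ∀ i j, i < j → j < ℓ → b i < a j := by
    intro i j hij hj
    obtain ⟨k, rfl⟩ : ∃ k, j = k + 1 := ⟨j - 1, by omega⟩
    have h1 : b i ≤ b k := hmono k (by omega) i (by omega)
    have h2 := hord k hj
    omega
  have hXmem : ∀ x ∈ X, 0 < x ∧ x ≤ N := by
    intro x hx
    simp only [hX, Finset.mem_biUnion, Finset.mem_range, Finset.mem_Icc] at hx
    obtain ⟨i, hi, h1, h2⟩ := hx
    have := ha i hi
    have hbi : b i ≤ N := hmono (ℓ - 1) (by omega) i (by omega)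
    omega
  have hstep : ∀ A ∈ t, (if A.gcd id = 1 then (1 : ℤ) else 0)
      = ∑ d ∈ Finset.Icc 1 N,
          if d ∣ A.gcd id then (ArithmeticFunction.moebius d : ℤ) else 0 := by
    intro A hA
    simp only [ht, Finset.mem_filter, Finset.mem_powerset] at hA
    obtain ⟨hAX, hAne⟩ := hA
    obtain ⟨x, hxA⟩ := hAne
    have hx := hXmem x (hAX hxA)
    have hgdvd : A.gcd id ∣ x := Finset.gcd_dvd hxA
    have hgpos : 0 < A.gcd id := Nat.pos_of_dvd_of_pos hgdvd hx.1
    have hgN : A.gcd id ≤ N := le_trans (Nat.le_of_dvd hx.1 hgdvd) hx.2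
    have hdivset : (A.gcd id).divisors = (Finset.Icc 1 N).filter (· ∣ A.gcd id) := by
      ext d
      simp only [Nat.mem_divisors, Finset.mem_filter, Finset.mem_Icc]
      constructor
      · rintro ⟨hd, -⟩
        have hd0 : 0 < d := Nat.pos_of_dvd_of_pos hd hgpos
        exact ⟨⟨hd0, le_trans (Nat.le_of_dvd hgpos hd) hgN⟩, hd⟩
      · rintro ⟨-, hd⟩; exact ⟨hd, hgpos.ne'⟩
    calc (if A.gcd id = 1 then (1 : ℤ) else 0)
        = (1 : ArithmeticFunction ℤ) (A.gcd id) := (ArithmeticFunction.one_apply).symm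
      _ = ((ArithmeticFunction.moebius * ArithmeticFunction.zeta) (A.gcd id)) := by
          rw [ArithmeticFunction.moebius_mul_coe_zeta]
      _ = ∑ i ∈ (A.gcd id).divisors, ArithmeticFunction.moebius i :=
          ArithmeticFunction.coe_mul_zeta_apply
      _ = ∑ d ∈ (Finset.Icc 1 N).filter (· ∣ A.gcd id), ArithmeticFunction.moebius d := by
          rw [hdivset]
      _ = ∑ d ∈ Finset.Icc 1 N,
            if d ∣ A.gcd id then (ArithmeticFunction.moebius d : ℤ) else 0 :=
          Finset.sum_filter _ _
  have hcard : ∀ d ∈ Finset.Icc 1 N, ((t.filter (fun A => d ∣ A.gcd id)).card : ℤ)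
      = 2 ^ (∑ i ∈ Finset.range ℓ, (b i / d - (a i - 1) / d)) - 1 := by
    intro d hd
    simp only [Finset.mem_Icc] at hd
    have hset : t.filter (fun A => d ∣ A.gcd id)
        = (X.filter (fun x => d ∣ x)).powerset.erase ∅ := by
      ext A
      simp only [ht, Finset.mem_filter, Finset.mem_powerset, Finset.mem_erase]
      constructor
      · rintro ⟨⟨hAX, hAne⟩, hdvd⟩
        refine ⟨Finset.nonempty_iff_ne_empty.mp hAne, fun x hx => ?_⟩
        exact Finset.mem_filter.mpr ⟨hAX hx, dvd_trans hdvd (Finset.gcd_dvd hx)⟩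
      · rintro ⟨hne, hsub⟩
        refine ⟨⟨fun x hx => (Finset.mem_filter.mp (hsub hx)).1,
          Finset.nonempty_iff_ne_empty.mpr hne⟩, ?_⟩
        exact Finset.dvd_gcd fun x hx => (Finset.mem_filter.mp (hsub hx)).2
    have hcount : (X.filter (fun x => d ∣ x)).card
        = ∑ i ∈ Finset.range ℓ, (b i / d - (a i - 1) / d) := by
      rw [hX, Finset.filter_biUnion, Finset.card_biUnion]
      · apply Finset.sum_congr rfl
        intro i hi
        rw [Finset.mem_range] at hi
        have ha' := ha i hi
        have hIcc : Finset.Icc (a i) (b i) = Finset.Ioc (a i - 1) (b i) := by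
          rw [← Finset.Icc_add_one_left_eq_Ioc]; congr 1; omega
        rw [hIcc, count_dvd_Ioc d _ _ (by have := hab i hi; omega)]
      · intro i hi j hj hij
        apply Finset.disjoint_filter_filter
        rw [Finset.mem_coe, Finset.mem_range] at hi hj
        rw [Finset.disjoint_left]
        intro x hx hx'
        simp only [Finset.mem_Icc] at hx hx'
        rcases Nat.lt_or_ge i j with h | h
        · have := hblta i j h hj; omega
        · have := hblta j i (by omega) hi; omega
    rw [hset, Finset.card_erase_of_mem (Finset.empty_mem_powerset _),
      Finset.card_powerset, hcount]
    have h1 : 1 ≤ 2 ^ (∑ i ∈ Finset.range ℓ, (b i / d - (a i - 1) / d)) :=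
      Nat.one_le_two_pow
    push_cast [Nat.cast_sub h1]
    ring
  calc ((X.powerset.filter (fun A => A.Nonempty ∧ A.gcd id = 1)).card : ℤ)
      = ((t.filter (fun A => A.gcd id = 1)).card : ℤ) := by
        rw [ht, Finset.filter_filter]
    _ = ∑ A ∈ t, (if A.gcd id = 1 then (1 : ℤ) else 0) := by
        rw [Finset.card_filter]; push_cast; rfl
    _ = ∑ A ∈ t, ∑ d ∈ Finset.Icc 1 N,
          (if d ∣ A.gcd id then (ArithmeticFunction.moebius d : ℤ) else 0) :=
        Finset.sum_congr rfl hstep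
    _ = ∑ d ∈ Finset.Icc 1 N, ∑ A ∈ t,
          (if d ∣ A.gcd id then (ArithmeticFunction.moebius d : ℤ) else 0) :=
        Finset.sum_comm
    _ = ∑ d ∈ Finset.Icc 1 N,
          (ArithmeticFunction.moebius d : ℤ) * ((t.filter (fun A => d ∣ A.gcd id)).card : ℤ) := by
        apply Finset.sum_congr rfl
        intro d _
        rw [← Finset.sum_filter, Finset.sum_const, nsmul_eq_mul, mul_comm]
    _ = ∑ d ∈ Finset.Icc 1 N,
          ArithmeticFunction.moebius d *
            (2 ^ (∑ i ∈ Finset.range ℓ, (b i / d - (a i - 1) / d)) - 1) := by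
        apply Finset.sum_congr rfl
        intro d hd
        rw [hcard d hd]
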